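/- Let a(t) be differentiable with ‖ȧ(t)‖ ≤ ε for all t, and let ã(t) = â(t) − a(t) where dâ/dt = −αΓã(t) with Γ symmetric positive definite constant and α > 0. Then limsup_{t→∞} ‖ã(t)‖ ≤ ε/(α μ), where μ > 0 is the smallest eigenvalue of Γ. -/

import Mathlib

open Matrix Filter

local notation "⟪" x ", " y "⟫" => @inner ℝ _ _ x y

/-- Rayleigh-type lower bound: the quadratic form of a hermitian matrix is bounded
below by the least eigenvalue times the squared norm. -/
lemma rayleigh_min {m : ℕ} (Γ : Matrix (Fin m) (Fin m) ℝ) (hΓ : Γ.IsHermitian)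
    {μ : ℝ} (hmin : ∀ i, μ ≤ hΓ.eigenvalues i) (x : EuclideanSpace ℝ (Fin m)) :
    μ * ‖x‖ ^ 2 ≤ ⟪x, ((PiLp.continuousLinearEquiv 2 ℝ (fun _ : Fin m => ℝ)).symm
      (Γ *ᵥ (x : Fin m → ℝ)) : EuclideanSpace ℝ (Fin m))⟫ := by
  classical
  set b := hΓ.eigenvectorBasis with hb
  set y : EuclideanSpace ℝ (Fin m) :=
    (PiLp.continuousLinearEquiv 2 ℝ (fun _ : Fin m => ℝ)).symm (Γ *ᵥ (x : Fin m → ℝ)) with hy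
  have hyi : ∀ i, (y : Fin m → ℝ) i = (Γ *ᵥ (x : Fin m → ℝ)) i := fun i => rfl
  have hrepr : ∀ i, b.repr y i = hΓ.eigenvalues i * b.repr x i := by
    intro i
    rw [b.repr_apply_apply, b.repr_apply_apply]
    have h1 : ⟪b i, y⟫ = (⇑(b i) : Fin m → ℝ) ⬝ᵥ (Γ *ᵥ (x : Fin m → ℝ)) := by
      simp only [PiLp.inner_apply, RCLike.inner_apply, starRingEnd_apply, star_trivial]
      rw [dotProduct]; exact Finset.sum_congr rfl fun j _ => mul_comm _ _
    have h2 : ⟪b i, x⟫ = (⇑(b i) : Fin m → ℝ) ⬝ᵥ (x : Fin m → ℝ) := by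
      simp only [PiLp.inner_apply, RCLike.inner_apply, starRingEnd_apply, star_trivial]
      rw [dotProduct]; exact Finset.sum_congr rfl fun j _ => mul_comm _ _
    rw [h1, h2, Matrix.dotProduct_mulVec, ← Matrix.mulVec_transpose]
    have hT : Γᵀ = Γ := by
      have := hΓ.eq
      rwa [Matrix.conjTranspose_eq_transpose_of_trivial] at this
    rw [hT, hΓ.mulVec_eigenvectorBasis, smul_dotProduct, smul_eq_mul]
  have hinner : ∀ u v : EuclideanSpace ℝ (Fin m), ⟪u, v⟫ = ∑ i, b.repr u i * b.repr v i := by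
    intro u v
    rw [← b.repr.inner_map_map u v]
    simp only [PiLp.inner_apply, RCLike.inner_apply, starRingEnd_apply, star_trivial]
    exact Finset.sum_congr rfl fun j _ => mul_comm _ _
  have hnorm : ‖x‖ ^ 2 = ∑ i, b.repr x i ^ 2 := by
    rw [← real_inner_self_eq_norm_sq, hinner]
    simp [sq]
  rw [hinner x y, hnorm, Finset.mul_sum]
  apply Finset.sum_le_sum
  intro i _
  rw [hrepr i, ← mul_assoc, mul_comm (b.repr x i), mul_assoc, ← sq]
  exact mul_le_mul_of_nonneg_right (hmin i) (sq_nonneg _)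

set_option maxHeartbeats 2000000 in
/-- if the true parameter drifts with rate at most ε and
dâ/dt = −αΓã with Γ constant symmetric positive definite, then
limsup_{t→∞} ‖ã(t)‖ ≤ ε/(αμ), μ the smallest eigenvalue of Γ. -/
theorem slowly_varying_parameter_tracking (m : ℕ) (α ε : ℝ)
    (hα : 0 < α) (hε : 0 ≤ ε)
    (Γ : Matrix (Fin m) (Fin m) ℝ) (hΓ : Γ.PosDef)
    (μ : ℝ) (hμ : IsLeast (Set.range hΓ.isHermitian.eigenvalues) μ)
    (a ahat : ℝ → Fin m → ℝ) (a' : ℝ → Fin m → ℝ)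
    (hda : ∀ t, HasDerivAt a (a' t) t)
    (hdrift : ∀ t, Real.sqrt (∑ i, (a' t i) ^ 2) ≤ ε)
    (hadapt : ∀ t, HasDerivAt ahat ((-α) • (Γ *ᵥ (ahat t - a t))) t) :
    Filter.limsup (fun t => Real.sqrt (∑ i, (ahat t i - a t i) ^ 2)) atTop
      ≤ ε / (α * μ) := by
  classical
  obtain ⟨i0, hi0⟩ := hμ.1
  have hμpos : 0 < μ := hi0 ▸ hΓ.eigenvalues_pos i0
  have hmin : ∀ i, μ ≤ hΓ.isHermitian.eigenvalues i := fun i => hμ.2 ⟨i, rfl⟩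
  have hαμ : 0 < α * μ := mul_pos hα hμpos
  set L := (PiLp.continuousLinearEquiv 2 ℝ (fun _ : Fin m => ℝ)).symm with hL
  -- the parameter error, viewed in Euclidean space
  set f : ℝ → EuclideanSpace ℝ (Fin m) := fun t => L (ahat t - a t) with hfdef
  set f' : ℝ → EuclideanSpace ℝ (Fin m) :=
    fun t => L ((-α) • (Γ *ᵥ (ahat t - a t)) - a' t) with hf'def
  have hnormL : ∀ v : Fin m → ℝ,
      ‖(L v : EuclideanSpace ℝ (Fin m))‖ = Real.sqrt (∑ i, (v i) ^ 2) := by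
    intro v
    rw [EuclideanSpace.norm_eq]
    congr 1
    refine Finset.sum_congr rfl fun i _ => ?_
    rw [Real.norm_eq_abs, sq_abs]
    rfl
  have hFnorm : ∀ t, Real.sqrt (∑ i, (ahat t i - a t i) ^ 2) = ‖f t‖ := by
    intro t
    rw [hnormL]
    simp [Pi.sub_apply]
  have hdf : ∀ t, HasDerivAt f (f' t) t := by
    intro t
    exact (L.hasFDerivAt).comp_hasDerivAt t ((hadapt t).sub (hda t))
  -- the squared norm and its derivative
  set g : ℝ → ℝ := fun t => ‖f t‖ ^ 2 with hgdef
  set g' : ℝ → ℝ := fun t => ⟪f t, f' t⟫ + ⟪f' t, f t⟫ with hg'def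
  have hdg : ∀ t, HasDerivAt g (g' t) t := by
    intro t
    have := HasDerivAt.inner ℝ (hdf t) (hdf t)
    simpa only [real_inner_self_eq_norm_sq] using this
  have hgcont : Continuous g :=
    continuous_iff_continuousAt.2 fun t => (hdg t).continuousAt
  have hgnonneg : ∀ t, 0 ≤ g t := fun t => sq_nonneg _
  -- the key differential inequality
  have hkey : ∀ t, ⟪f t, f' t⟫ ≤ -(α * μ) * g t + ε * ‖f t‖ := by
    intro t
    have hsplit : ⟪f t, f' t⟫
        = (-α) * ⟪f t, (L (Γ *ᵥ (ahat t - a t)) : EuclideanSpace ℝ (Fin m))⟫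
          - ⟪f t, (L (a' t) : EuclideanSpace ℝ (Fin m))⟫ := by
      rw [hf'def]
      simp only [map_sub, inner_sub_right]
      rw [L.map_smul, real_inner_smul_right]
    have h1 : μ * ‖f t‖ ^ 2
        ≤ ⟪f t, (L (Γ *ᵥ (ahat t - a t)) : EuclideanSpace ℝ (Fin m))⟫ :=
      rayleigh_min Γ hΓ.isHermitian hmin (f t)
    have h2 : -⟪f t, (L (a' t) : EuclideanSpace ℝ (Fin m))⟫ ≤ ε * ‖f t‖ := by
      have habs := abs_real_inner_le_norm (f t) (L (a' t) : EuclideanSpace ℝ (Fin m))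
      have hna : ‖(L (a' t) : EuclideanSpace ℝ (Fin m))‖ ≤ ε := by
        rw [hnormL]; exact hdrift t
      have h3 : ‖f t‖ * ‖(L (a' t) : EuclideanSpace ℝ (Fin m))‖ ≤ ‖f t‖ * ε :=
        mul_le_mul_of_nonneg_left hna (norm_nonneg _)
      have h4 := neg_abs_le (⟪f t, (L (a' t) : EuclideanSpace ℝ (Fin m))⟫)
      nlinarith [abs_nonneg (⟪f t, (L (a' t) : EuclideanSpace ℝ (Fin m))⟫)]
    have h5 : (-α) * ⟪f t, (L (Γ *ᵥ (ahat t - a t)) : EuclideanSpace ℝ (Fin m))⟫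
        ≤ (-α) * (μ * ‖f t‖ ^ 2) :=
      mul_le_mul_of_nonpos_left h1 (by linarith)
    rw [hsplit, hgdef]
    simp only
    nlinarith
  -- conclude for every bound strictly above ε / (α μ)
  refine le_of_forall_gt_imp_ge_of_dense fun b hb => ?_
  have hb0 : 0 < b := lt_of_le_of_lt (div_nonneg hε hαμ.le) hb
  set ε' : ℝ := (ε + b * (α * μ)) / 2 with hε'def
  have hεb : ε < b * (α * μ) := by
    rw [div_lt_iff₀ hαμ] at hb
    linarith
  have hεε' : ε < ε' := by rw [hε'def]; linarith
  have hε'pos : 0 < ε' := lt_of_le_of_lt hε hεε'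
  set c : ℝ := ε' / (α * μ) with hcdef
  have hcpos : 0 < c := div_pos hε'pos hαμ
  have hcb : c < b := by
    rw [hcdef, div_lt_iff₀ hαμ, hε'def]
    linarith
  have hε'c : ε' = c * (α * μ) := by
    rw [hcdef, div_mul_cancel₀ _ hαμ.ne']
  have hKneg : -(α * μ) < 0 := neg_neg_iff_pos.mpr hαμ
  -- linear bound on the derivative of g
  have hbound : ∀ t, g' t ≤ -(α * μ) * g t + ε' * c := by
    intro t
    have h2 : g' t = 2 * ⟪f t, f' t⟫ := by
      rw [hg'def]; simp only [real_inner_comm (f' t) (f t)]; ring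
    have hk := hkey t
    have hq : 2 * ε' * ‖f t‖ ≤ (α * μ) * g t + ε' * c := by
      have hsq : 0 ≤ (‖f t‖ - c) ^ 2 := sq_nonneg _
      rw [hε'c, hgdef]
      simp only
      nlinarith [mul_pos hα hμpos, sq_nonneg (‖f t‖ - c)]
    have hεf : ε * ‖f t‖ ≤ ε' * ‖f t‖ :=
      mul_le_mul_of_nonneg_right hεε'.le (norm_nonneg _)
    rw [h2]
    linarith
  -- Gronwall
  have hgron : ∀ t ∈ Set.Ici (0 : ℝ), g t ≤ gronwallBound (g 0) (-(α * μ)) (ε' * c) t := by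
    intro t ht
    have := le_gronwallBound_of_liminf_deriv_right_le (f := g) (f' := g')
      (a := 0) (b := t) (δ := g 0) (K := -(α * μ)) (ε := ε' * c) hgcont.continuousOn
      (fun x _ r hr => by
        have hs := ((hdg x).hasDerivWithinAt (s := Set.Ici x)).liminf_right_slope_le hr
        refine hs.mono fun z hz => ?_
        rwa [slope_def_field, div_eq_inv_mul] at hz)
      le_rfl (fun x _ => hbound x) t ⟨ht, le_rfl⟩
    simpa using this
  -- the Gronwall bound tends to c² < b²
  have hKne : -(α * μ) ≠ 0 := hKneg.ne
  have hexp : Tendsto (fun t : ℝ => Real.exp (-(α * μ) * t)) atTop (nhds 0) :=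
    Real.tendsto_exp_atBot.comp ((tendsto_const_mul_atBot_of_neg hKneg).2 tendsto_id)
  have hBlim : Tendsto (fun t => gronwallBound (g 0) (-(α * μ)) (ε' * c) t) atTop
      (nhds (g 0 * 0 + (ε' * c) / (-(α * μ)) * (0 - 1))) := by
    have heq : (fun t => gronwallBound (g 0) (-(α * μ)) (ε' * c) t)
        = fun t => g 0 * Real.exp (-(α * μ) * t)
            + (ε' * c) / (-(α * μ)) * (Real.exp (-(α * μ) * t) - 1) := by
      funext t
      rw [gronwallBound_of_K_ne_0 hKne]
    rw [heq]
    exact ((hexp.const_mul (g 0)).add ((hexp.sub_const 1).const_mul ((ε' * c) / (-(α * μ)))))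
  have hval : g 0 * 0 + (ε' * c) / (-(α * μ)) * (0 - 1) = c ^ 2 := by
    rw [hε'c]
    field_simp
    ring
  rw [hval] at hBlim
  have hc2b2 : c ^ 2 < b ^ 2 := by nlinarith
  have hev : ∀ᶠ t in atTop, gronwallBound (g 0) (-(α * μ)) (ε' * c) t < b ^ 2 :=
    hBlim.eventually_lt_const hc2b2
  have hfinal : ∀ᶠ t in atTop,
      Real.sqrt (∑ i, (ahat t i - a t i) ^ 2) ≤ b := by
    filter_upwards [hev, eventually_ge_atTop (0 : ℝ)] with t hBt ht0
    have hgt : g t < b ^ 2 := lt_of_le_of_lt (hgron t ht0) hBt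
    have : ‖f t‖ < b := by
      rw [hgdef] at hgt
      simp only at hgt
      exact lt_of_pow_lt_pow_left₀ 2 hb0.le hgt
    rw [hFnorm t]
    exact this.le
  exact limsup_le_of_le
    (isCoboundedUnder_le_of_le atTop fun t => Real.sqrt_nonneg _) hfinal
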